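/- Let k ∈ ℝ, define c_k(t) = cos(√k t) for k > 0, cosh(√(-k) t) for k < 0, and 1 for k = 0; similarly s_k(t) = sin(√k t)/√k, sinh(√(-k) t)/√(-k), or t. Let ct_k = c_k/s_k and let I be an open subinterval of (0, l), with l ≤ π/√k if k > 0. If φ : I → ℝ is C² and satisfies φ'' + k φ ≥ 0 on I, then the function y ↦ √(k + y²)·φ(ct_k⁻¹(y)) is convex on ct_k(I). -/

import Mathlib

/-- Generalized cosine `c_k`. -/
noncomputable def ck (k t : ℝ) : ℝ :=
  if k = 0 then 1
  else if 0 < k then Real.cos (Real.sqrt k * t)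
  else Real.cosh (Real.sqrt (-k) * t)

/-- Generalized sine `s_k`. -/
noncomputable def sk (k t : ℝ) : ℝ :=
  if k = 0 then t
  else if 0 < k then Real.sin (Real.sqrt k * t) / Real.sqrt k
  else Real.sinh (Real.sqrt (-k) * t) / Real.sqrt (-k)

/-- Generalized cotangent `ct_k = c_k/s_k`. -/
noncomputable def ctk (k t : ℝ) : ℝ := ck k t / sk k t

lemma sk_hasDerivAt (k x : ℝ) : HasDerivAt (sk k) (ck k x) x := by
  unfold sk ck
  rcases lt_trichotomy k 0 with hk | hk | hk
  · simp only [hk.ne, if_false, hk.not_gt, if_false]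
    have h0 : Real.sqrt (-k) ≠ 0 := ne_of_gt (Real.sqrt_pos.2 (by linarith))
    have := ((Real.hasDerivAt_sinh (Real.sqrt (-k) * x)).comp x
      ((hasDerivAt_id x).const_mul (Real.sqrt (-k)))).div_const (Real.sqrt (-k))
    convert this using 1
    any_goals rfl
    field_simp
  · subst hk; simpa using hasDerivAt_id' x
  · simp only [hk.ne', if_false, hk, if_true]
    have h0 : Real.sqrt k ≠ 0 := ne_of_gt (Real.sqrt_pos.2 hk)
    have := ((Real.hasDerivAt_sin (Real.sqrt k * x)).comp x
      ((hasDerivAt_id x).const_mul (Real.sqrt k))).div_const (Real.sqrt k)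
    convert this using 1
    any_goals rfl
    field_simp

lemma ck_hasDerivAt (k x : ℝ) : HasDerivAt (ck k) (-(k * sk k x)) x := by
  unfold sk ck
  rcases lt_trichotomy k 0 with hk | hk | hk
  · simp only [hk.ne, if_false, hk.not_gt, if_false]
    have h0 : Real.sqrt (-k) ≠ 0 := ne_of_gt (Real.sqrt_pos.2 (by linarith))
    have hsq : Real.sqrt (-k) * Real.sqrt (-k) = -k := Real.mul_self_sqrt (by linarith)
    have := (Real.hasDerivAt_cosh (Real.sqrt (-k) * x)).comp x
      ((hasDerivAt_id x).const_mul (Real.sqrt (-k)))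
    convert this using 1
    any_goals rfl
    field_simp
    linear_combination (-(Real.sinh (Real.sqrt (-k) * x))) * hsq
  · subst hk; simpa using hasDerivAt_const x (1:ℝ)
  · simp only [hk.ne', if_false, hk, if_true]
    have h0 : Real.sqrt k ≠ 0 := ne_of_gt (Real.sqrt_pos.2 hk)
    have hsq : Real.sqrt k * Real.sqrt k = k := Real.mul_self_sqrt hk.le
    have := (Real.hasDerivAt_cos (Real.sqrt k * x)).comp x
      ((hasDerivAt_id x).const_mul (Real.sqrt k))
    convert this using 1
    any_goals rfl
    field_simp
    linear_combination (Real.sin (Real.sqrt k * x)) * hsq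

lemma ck_sq_add (k x : ℝ) : ck k x ^ 2 + k * sk k x ^ 2 = 1 := by
  unfold sk ck
  rcases lt_trichotomy k 0 with hk | hk | hk
  · simp only [hk.ne, if_false, hk.not_gt, if_false]
    have h0 : Real.sqrt (-k) ≠ 0 := ne_of_gt (Real.sqrt_pos.2 (by linarith))
    have hsq : Real.sqrt (-k) ^ 2 = -k := Real.sq_sqrt (by linarith)
    have h1 := Real.cosh_sq_sub_sinh_sq (Real.sqrt (-k) * x)
    field_simp
    nlinarith [h1, hsq]
  · simp [hk]
  · simp only [hk.ne', if_false, hk, if_true]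
    have h0 : Real.sqrt k ≠ 0 := ne_of_gt (Real.sqrt_pos.2 hk)
    have hsq : Real.sqrt k ^ 2 = k := Real.sq_sqrt hk.le
    have h1 := Real.sin_sq_add_cos_sq (Real.sqrt k * x)
    field_simp
    try nlinarith [h1, hsq]

lemma sk_pos {k l : ℝ} (hlk : 0 < k → l ≤ Real.pi / Real.sqrt k) {x : ℝ}
    (hx : x ∈ Set.Ioo 0 l) : 0 < sk k x := by
  unfold sk
  rcases lt_trichotomy k 0 with hk | hk | hk
  · simp only [hk.ne, if_false, hk.not_gt, if_false]
    have h0 : 0 < Real.sqrt (-k) := Real.sqrt_pos.2 (by linarith)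
    exact div_pos (Real.sinh_pos_iff.2 (mul_pos h0 hx.1)) h0
  · simpa [hk] using hx.1
  · simp only [hk.ne', if_false, hk, if_true]
    have h0 : 0 < Real.sqrt k := Real.sqrt_pos.2 hk
    refine div_pos (Real.sin_pos_of_pos_of_lt_pi (mul_pos h0 hx.1) ?_) h0
    have h2 := hlk hk
    calc Real.sqrt k * x < Real.sqrt k * l := by nlinarith [hx.2]
      _ ≤ Real.sqrt k * (Real.pi / Real.sqrt k) := by nlinarith
      _ = Real.pi := by field_simp

lemma ctk_hasDerivAt {k x : ℝ} (hs : sk k x ≠ 0) :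
    HasDerivAt (ctk k) (-(1 / sk k x ^ 2)) x := by
  have h := (ck_hasDerivAt k x).div (sk_hasDerivAt k x) hs
  convert h using 1
  any_goals rfl
  have h1 := ck_sq_add k x
  field_simp
  linarith

/-- If `φ` is `C²` on an open subinterval `I` of `(0, l)` (with `l ≤ π/√k`
when `k > 0`) and satisfies `φ'' + kφ ≥ 0` on `I`, then
`y ↦ √(k + y²)·φ(ct_k⁻¹(y))` is convex on `ct_k(I)`. -/
theorem stmt_8 (k l : ℝ) (hl : 0 < l) (hlk : 0 < k → l ≤ Real.pi / Real.sqrt k)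
    (a b : ℝ) (hab : Set.Ioo a b ⊆ Set.Ioo 0 l)
    (φ : ℝ → ℝ) (hφ : ContDiffOn ℝ 2 φ (Set.Ioo a b))
    (hconv : ∀ x ∈ Set.Ioo a b, 0 ≤ deriv (deriv φ) x + k * φ x) :
    ConvexOn ℝ (ctk k '' Set.Ioo a b)
      (fun y => Real.sqrt (k + y ^ 2) *
        φ (Function.invFunOn (ctk k) (Set.Ioo a b) y)) := by
  classical
  set I : Set ℝ := Set.Ioo a b with hIdef
  set inv : ℝ → ℝ := Function.invFunOn (ctk k) I with hinvdef
  set f : ℝ → ℝ := fun y => Real.sqrt (k + y ^ 2) * φ (inv y) with hfdef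
  set s : Set ℝ := ctk k '' I with hsdef
  have hIopen : IsOpen I := isOpen_Ioo
  have hspos : ∀ x ∈ I, 0 < sk k x := fun x hx => sk_pos hlk (hab hx)
  have hct : ∀ x ∈ I, HasDerivAt (ctk k) (-(1 / sk k x ^ 2)) x := fun x hx =>
    ctk_hasDerivAt (ne_of_gt (hspos x hx))
  have hcont : ContinuousOn (ctk k) I := fun x hx =>
    ((hct x hx).continuousAt).continuousWithinAt
  have hanti : StrictAntiOn (ctk k) I := by
    apply strictAntiOn_of_deriv_neg (convex_Ioo a b) hcont
    intro x hx
    rw [interior_Ioo] at hx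
    rw [(hct x hx).deriv]
    have h := hspos x hx
    have : 0 < 1 / sk k x ^ 2 := by positivity
    linarith
  have hinj := hanti.injOn
  have hleft : ∀ x ∈ I, inv (ctk k x) = x := fun x hx =>
    hinj.leftInvOn_invFunOn hx
  -- key eventual lemma
  have hmem : ∀ x ∈ I, ∀ x₁ x₂, a < x₁ → x₁ < x → x < x₂ → x₂ < b →
      ∀ᶠ y' in nhds (ctk k x), (inv y' ∈ Set.Ioo x₁ x₂ ∧ y' ∈ s) := by
    intro x hx x₁ x₂ h1 h2 h3 h4
    have hx₁ : x₁ ∈ I := ⟨h1, h2.trans (h3.trans h4)⟩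
    have hx₂ : x₂ ∈ I := ⟨h1.trans (h2.trans h3), h4⟩
    have hIcc : Set.Icc x₁ x₂ ⊆ I := fun z hz =>
      ⟨lt_of_lt_of_le h1 hz.1, lt_of_le_of_lt hz.2 h4⟩
    have hnb : Set.Ioo (ctk k x₂) (ctk k x₁) ∈ nhds (ctk k x) :=
      isOpen_Ioo.mem_nhds ⟨hanti hx hx₂ h3, hanti hx₁ hx h2⟩
    filter_upwards [hnb] with y' hy'
    obtain ⟨x', hx'io, hx'eq⟩ :=
      intermediate_value_Ioo' (le_of_lt (h2.trans h3)) (hcont.mono hIcc) hy'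
    have hx'I : x' ∈ I := hIcc (Set.Ioo_subset_Icc_self hx'io)
    refine ⟨?_, ⟨x', hx'I, hx'eq⟩⟩
    rw [← hx'eq, hleft x' hx'I]
    exact hx'io
  have hsnhds : ∀ y ∈ s, s ∈ nhds y := by
    rintro y ⟨x, hx, rfl⟩
    have h := (hmem x hx ((a + x) / 2) ((x + b) / 2)
      (by linarith [hx.1]) (by linarith [hx.1]) (by linarith [hx.2]) (by linarith [hx.2])).mono
      (fun y' h => h.2)
    simpa only [Filter.eventually_iff, Set.setOf_mem_eq] using h
  have hinvcont : ∀ x ∈ I, ContinuousAt inv (ctk k x) := by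
    intro x hx
    rw [ContinuousAt, hleft x hx, (nhds_basis_Ioo x).tendsto_right_iff]
    rintro ⟨p₁, p₂⟩ ⟨hp₁, hp₂⟩
    have ha1 : a < max p₁ ((a + x) / 2) :=
      lt_of_lt_of_le (by linarith [hx.1]) (le_max_right _ _)
    have h1x : max p₁ ((a + x) / 2) < x := max_lt hp₁ (by linarith [hx.1])
    have hx2 : x < min p₂ ((x + b) / 2) := lt_min hp₂ (by linarith [hx.2])
    have h2b : min p₂ ((x + b) / 2) < b :=
      lt_of_le_of_lt (min_le_right _ _) (by linarith [hx.2])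
    filter_upwards [hmem x hx _ _ ha1 h1x hx2 h2b] with y' h
    exact ⟨lt_of_le_of_lt (le_max_left _ _) h.1.1,
      lt_of_lt_of_le h.1.2 (min_le_left _ _)⟩
  have hfg : ∀ x ∈ I, ∀ᶠ y' in nhds (ctk k x), ctk k (inv y') = y' := by
    intro x hx
    filter_upwards [hsnhds _ ⟨x, hx, rfl⟩] with y' hy'
    exact Function.invFunOn_eq (by rcases hy' with ⟨x', h', rfl⟩; exact ⟨x', h', rfl⟩)
  have hinvd : ∀ x ∈ I, HasDerivAt inv (-(sk k x ^ 2)) (ctk k x) := by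
    intro x hx
    have hsx := hspos x hx
    have h := HasDerivAt.of_local_left_inverse (hinvcont x hx)
      (by rw [hleft x hx]; exact hct x hx)
      (by intro hc; rw [neg_eq_zero, div_eq_zero_iff] at hc
          rcases hc with hc | hc
          · exact one_ne_zero hc
          · exact (pow_ne_zero 2 (ne_of_gt hsx)) hc)
      (hfg x hx)
    convert h using 1
    any_goals rfl
    field_simp
  -- derivative facts for φ
  have hφ1 : ∀ x ∈ I, HasDerivAt φ (deriv φ x) x := fun x hx =>
    ((hφ.differentiableOn (by norm_num)).differentiableAt (hIopen.mem_nhds hx)).hasDerivAt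
  have hφder : ContDiffOn ℝ 1 (deriv φ) I := by
    have h2 : ContDiffOn ℝ ((1 : ℕ) + 1) φ I := by exact_mod_cast hφ
    exact ((contDiffOn_succ_iff_deriv_of_isOpen hIopen).1 h2).2.2
  have hφ2 : ∀ x ∈ I, HasDerivAt (deriv φ) (deriv (deriv φ) x) x := fun x hx =>
    ((hφder.differentiableOn one_ne_zero).differentiableAt (hIopen.mem_nhds hx)).hasDerivAt
  -- sqrt identity
  have hsqrt : ∀ x ∈ I, Real.sqrt (k + ctk k x ^ 2) = 1 / sk k x := by
    intro x hx
    have hs := hspos x hx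
    have h1 : k + ctk k x ^ 2 = (1 / sk k x) ^ 2 := by
      have hck := ck_sq_add k x
      rw [ctk]
      field_simp
      linarith
    rw [h1, Real.sqrt_sq (by positivity)]
  have hfeq : ∀ x ∈ I, ∀ᶠ y' in nhds (ctk k x),
      f y' = φ (inv y') / sk k (inv y') := by
    intro x hx
    filter_upwards [hsnhds _ ⟨x, hx, rfl⟩] with y' hy'
    rcases hy' with ⟨x', hx', rfl⟩
    simp only [hfdef]
    rw [hleft x' hx', hsqrt x' hx']
    ring
  -- first derivative of f
  have hF1 : ∀ x ∈ I, HasDerivAt f (φ x * ck k x - deriv φ x * sk k x) (ctk k x) := by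
    intro x hx
    have hsx := hspos x hx
    have hg : HasDerivAt (fun z => φ z / sk k z)
        ((deriv φ x * sk k x - φ x * ck k x) / sk k x ^ 2) x :=
      (hφ1 x hx).div (sk_hasDerivAt k x) (ne_of_gt hsx)
    have hgx : HasDerivAt (fun z => φ z / sk k z)
        ((deriv φ x * sk k x - φ x * ck k x) / sk k x ^ 2) (inv (ctk k x)) := by
      rw [hleft x hx]; exact hg
    have hcomp := hgx.comp (ctk k x) (hinvd x hx)
    have hfd := hcomp.congr_of_eventuallyEq (hfeq x hx)
    convert hfd using 1
    any_goals rfl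
    field_simp
    ring
  have hderiv1 : ∀ x ∈ I, deriv f (ctk k x) = φ x * ck k x - deriv φ x * sk k x :=
    fun x hx => (hF1 x hx).deriv
  -- second derivative of f
  have hF2 : ∀ x ∈ I,
      HasDerivAt (deriv f) (sk k x ^ 3 * (deriv (deriv φ) x + k * φ x)) (ctk k x) := by
    intro x hx
    have hev : (deriv f) =ᶠ[nhds (ctk k x)]
        fun y => φ (inv y) * ck k (inv y) - deriv φ (inv y) * sk k (inv y) := by
      filter_upwards [hsnhds _ ⟨x, hx, rfl⟩] with y' hy'
      rcases hy' with ⟨x', hx', rfl⟩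
      rw [hderiv1 x' hx', hleft x' hx']
    have hg : HasDerivAt (fun z => φ z * ck k z - deriv φ z * sk k z)
        (deriv φ x * ck k x + φ x * (-(k * sk k x)) -
          (deriv (deriv φ) x * sk k x + deriv φ x * ck k x)) x :=
      ((hφ1 x hx).mul (ck_hasDerivAt k x)).sub ((hφ2 x hx).mul (sk_hasDerivAt k x))
    have hgx : HasDerivAt (fun z => φ z * ck k z - deriv φ z * sk k z)
        (deriv φ x * ck k x + φ x * (-(k * sk k x)) -
          (deriv (deriv φ) x * sk k x + deriv φ x * ck k x)) (inv (ctk k x)) := by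
      rw [hleft x hx]; exact hg
    have hcomp := hgx.comp (ctk k x) (hinvd x hx)
    have hfd := hcomp.congr_of_eventuallyEq hev
    convert hfd using 1
    any_goals rfl
    ring
  -- convexity of the image set
  have hconvS : Convex ℝ s := by
    rw [convex_iff_ordConnected]
    constructor
    rintro y₁ ⟨u, hu, rfl⟩ y₂ ⟨v, hv, rfl⟩ z hz
    have huv : Set.uIcc u v ⊆ I := Set.ordConnected_Ioo.uIcc_subset hu hv
    have h := intermediate_value_uIcc (hcont.mono huv) (Set.Icc_subset_uIcc hz)
    exact Set.image_mono huv h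
  apply convexOn_of_deriv2_nonneg' hconvS
  · rintro y ⟨x, hx, rfl⟩
    exact (hF1 x hx).differentiableAt.differentiableWithinAt
  · rintro y ⟨x, hx, rfl⟩
    exact (hF2 x hx).differentiableAt.differentiableWithinAt
  · rintro y ⟨x, hx, rfl⟩
    rw [show deriv^[2] f = deriv (deriv f) from rfl, (hF2 x hx).deriv]
    exact mul_nonneg (pow_nonneg (hspos x hx).le 3) (hconv x hx)
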